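/- arXiv:1910.09150 — 3 statements merged into one kernel-verified Lean document; each statement's English description precedes it below -/
import Mathlib

section
/- Let n ≥ 1, let g be admissible, let α ∈ [0,1), β ∈ (−π/2, π/2), and let h ∈ M̃_g^{α,β}. Then for every z ∈ 𝔹ⁿ one has (1−α)·cos β·‖z‖²·(min{g(‖z‖), g(−‖z‖)} + α/(1−α)) ≤ Re⟨e^{−iβ}·h(z), z⟩ ≤ (1−α)·cos β·‖z‖²·(max{g(‖z‖), g(−‖z‖)} + α/(1−α)). -/
open Complex Metric

noncomputable section

abbrev Cn (n : ℕ) := EuclideanSpace ℂ (Fin n)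

/-- An admissible function `g` in the sense of Definition 1.1. -/
structure Admissible (g : ℂ → ℂ) : Prop where
  holo : DifferentiableOn ℂ g (ball (0:ℂ) 1)
  inj : Set.InjOn g (ball (0:ℂ) 1)
  one : g 0 = 1
  conj_symm : ∀ ζ ∈ ball (0:ℂ) 1, g ((starRingEnd ℂ) ζ) = (starRingEnd ℂ) (g ζ)
  re_pos : ∀ ζ ∈ ball (0:ℂ) 1, 0 < (g ζ).re
  min_le : ∀ r : ℝ, 0 < r → r < 1 → ∀ ζ : ℂ, ‖ζ‖ = r →
      min (g (r:ℂ)).re (g (-(r:ℂ))).re ≤ (g ζ).re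
  le_max : ∀ r : ℝ, 0 < r → r < 1 → ∀ ζ : ℂ, ‖ζ‖ = r →
      (g ζ).re ≤ max (g (r:ℂ)).re (g (-(r:ℂ))).re

/-- Membership in the class `M̃_g^{α,β}`. -/
def MtildeMem (n : ℕ) (g : ℂ → ℂ) (α β : ℝ) (h : Cn n → Cn n) : Prop :=
  DifferentiableOn ℂ h (ball (0 : Cn n) 1) ∧ h 0 = 0 ∧
  fderiv ℂ h 0 = ContinuousLinearMap.id ℂ (Cn n) ∧
  ∀ z ∈ ball (0 : Cn n) 1, z ≠ 0 →
    ((-(α:ℂ) + Complex.I * (Real.tan β : ℂ)) / (1 - (α:ℂ)) +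
      (1 - Complex.I * (Real.tan β : ℂ)) / (1 - (α:ℂ)) *
        ((inner ℂ z (h z) : ℂ) / (‖z‖:ℂ)^2))
      ∈ g '' ball (0:ℂ) 1

/-- Membership in the class `Ŝ_g^{α,β}(𝔹ⁿ)`. -/
def ShatMem (n : ℕ) (g : ℂ → ℂ) (α β : ℝ) (f : Cn n → Cn n) : Prop :=
  DifferentiableOn ℂ f (ball (0 : Cn n) 1) ∧ f 0 = 0 ∧
  fderiv ℂ f 0 = ContinuousLinearMap.id ℂ (Cn n) ∧
  (∀ z ∈ ball (0 : Cn n) 1, Function.Bijective (fderiv ℂ f z)) ∧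
  ∃ w : Cn n → Cn n, (∀ z ∈ ball (0 : Cn n) 1, fderiv ℂ f z (w z) = f z) ∧
    MtildeMem n g α β w

end

section Aux
open Complex Metric Set Filter Function Topology


lemma reMin_of_frontier (g : ℂ → ℂ) (hd : DifferentiableOn ℂ g (ball (0:ℂ) 1))
    {r m : ℝ} (h0 : 0 < r) (h1 : r < 1)
    (hmin : ∀ ζ : ℂ, ‖ζ‖ = r → m ≤ (g ζ).re)
    {ζ₀ : ℂ} (hζ₀ : ‖ζ₀‖ ≤ r) : m ≤ (g ζ₀).re := by
  have hcl : closure (ball (0:ℂ) r) = closedBall 0 r := closure_ball 0 h0.ne'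
  have hsub : closedBall (0:ℂ) r ⊆ ball 0 1 := fun w hw => by
    rw [mem_closedBall_zero_iff] at hw; rw [mem_ball_zero_iff]; linarith
  have hdc : DiffContOnCl ℂ (fun w => Complex.exp (-(g w))) (ball 0 r) := by
    apply DifferentiableOn.diffContOnCl
    rw [hcl]
    exact ((hd.mono hsub).neg).cexp
  have hfr : ∀ w ∈ frontier (ball (0:ℂ) r), ‖Complex.exp (-(g w))‖ ≤ Real.exp (-m) := by
    intro w hw
    rw [frontier_ball 0 h0.ne'] at hw
    have habs : ‖w‖ = r := by rwa [mem_sphere_zero_iff_norm] at hw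
    rw [Complex.norm_exp]
    simp only [Complex.neg_re]
    exact Real.exp_le_exp.2 (neg_le_neg (hmin w habs))
  have hle := Complex.norm_le_of_forall_mem_frontier_norm_le isBounded_ball hdc hfr
    (z := ζ₀) (by rw [hcl, mem_closedBall_zero_iff]; exact hζ₀)
  rw [Complex.norm_exp] at hle
  simp only [Complex.neg_re] at hle
  have := Real.exp_le_exp.1 hle
  linarith

lemma reMax_of_frontier (g : ℂ → ℂ) (hd : DifferentiableOn ℂ g (ball (0:ℂ) 1))
    {r M : ℝ} (h0 : 0 < r) (h1 : r < 1)
    (hmax : ∀ ζ : ℂ, ‖ζ‖ = r → (g ζ).re ≤ M)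
    {ζ₀ : ℂ} (hζ₀ : ‖ζ₀‖ ≤ r) : (g ζ₀).re ≤ M := by
  have := reMin_of_frontier (fun w => -(g w)) hd.neg h0 h1 (m := -M)
    (fun ζ hζ => by simpa using neg_le_neg (hmax ζ hζ)) hζ₀
  simpa using this


lemma subordination (g ψ : ℂ → ℂ) (hgd : DifferentiableOn ℂ g (ball (0:ℂ) 1))
    (hginj : Set.InjOn g (ball (0:ℂ) 1))
    (hψd : DifferentiableOn ℂ ψ (ball (0:ℂ) 1))
    (hψ0 : ψ 0 = g 0)
    (hmaps : ∀ ξ ∈ ball (0:ℂ) 1, ψ ξ ∈ g '' ball (0:ℂ) 1) :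
    ∀ ξ ∈ ball (0:ℂ) 1, ∃ ζ ∈ ball (0:ℂ) 1, g ζ = ψ ξ ∧ ‖ζ‖ ≤ ‖ξ‖ := by
  have h0mem : (0:ℂ) ∈ ball (0:ℂ) 1 := mem_ball_self one_pos
  have hhalf : (1/2 : ℂ) ∈ ball (0:ℂ) 1 := by
    rw [mem_ball_zero_iff]
    norm_num
  have hne2 : (0:ℂ) ≠ 1/2 := by norm_num
  have hGa : AnalyticOnNhd ℂ g (ball (0:ℂ) 1) := hgd.analyticOnNhd isOpen_ball
  have hnc : ¬ ∃ w, ∀ ζ ∈ ball (0:ℂ) 1, g ζ = w := by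
    rintro ⟨w, hw⟩
    exact hne2 (hginj h0mem hhalf (by rw [hw _ h0mem, hw _ hhalf]))
  have hopen : ∀ s ⊆ ball (0:ℂ) 1, IsOpen s → IsOpen (g '' s) :=
    (hGa.is_constant_or_isOpen (convex_ball 0 1).isPreconnected).resolve_left hnc
  set invg := Function.invFunOn g (ball (0:ℂ) 1) with hinvgdef
  have hgig : ∀ ζ ∈ ball (0:ℂ) 1, invg (g ζ) = ζ := fun ζ hζ =>
    hginj (Function.invFunOn_mem ⟨ζ, hζ, rfl⟩) hζ (Function.invFunOn_eq ⟨ζ, hζ, rfl⟩)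
  have himg : ∀ y ∈ g '' ball (0:ℂ) 1, invg y ∈ ball (0:ℂ) 1 ∧ g (invg y) = y := by
    rintro y ⟨ζ, hζ, rfl⟩
    rw [hgig ζ hζ]
    exact ⟨hζ, rfl⟩
  have hio : IsOpen (g '' ball (0:ℂ) 1) := hopen _ (subset_refl _) isOpen_ball
  have hcont : ∀ y ∈ g '' ball (0:ℂ) 1, ContinuousAt invg y := by
    intro y hy
    rw [ContinuousAt, _root_.tendsto_nhds]
    intro V hVopen hVmem
    have hW : IsOpen (g '' (V ∩ ball (0:ℂ) 1)) :=
      hopen _ inter_subset_right (hVopen.inter isOpen_ball)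
    have hyW : y ∈ g '' (V ∩ ball (0:ℂ) 1) := by
      obtain ⟨ζ, hζ, rfl⟩ := hy
      exact ⟨ζ, ⟨by rwa [hgig ζ hζ] at hVmem, hζ⟩, rfl⟩
    refine Filter.mem_of_superset (hW.mem_nhds hyW) ?_
    rintro _ ⟨w, ⟨hwV, hwB⟩, rfl⟩
    rw [Set.mem_preimage, hgig w hwB]
    exact hwV
  set q := fun ξ => invg (ψ ξ) with hqdef
  have hqmem : ∀ ξ ∈ ball (0:ℂ) 1, q ξ ∈ ball (0:ℂ) 1 ∧ g (q ξ) = ψ ξ :=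
    fun ξ hξ => himg _ (hmaps ξ hξ)
  have hq0 : q 0 = 0 := by
    simp only [hqdef, hψ0]
    exact hgig 0 h0mem
  have hqc : ∀ ξ ∈ ball (0:ℂ) 1, ContinuousAt q ξ := fun ξ hξ =>
    (hcont _ (hmaps ξ hξ)).comp
      ((hψd.differentiableAt (isOpen_ball.mem_nhds hξ)).continuousAt)
  have hqdiff : ∀ ξ₀ ∈ ball (0:ℂ) 1, deriv g (q ξ₀) ≠ 0 → DifferentiableAt ℂ q ξ₀ := by
    intro ξ₀ hξ₀ hne
    have hζ₀ := (hqmem ξ₀ hξ₀).1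
    have hgat : HasDerivAt g (deriv g (q ξ₀)) (invg (ψ ξ₀)) :=
      (hgd.differentiableAt (isOpen_ball.mem_nhds hζ₀)).hasDerivAt
    have hev : ∀ᶠ y in 𝓝 (ψ ξ₀), g (invg y) = y := by
      filter_upwards [hio.mem_nhds (hmaps ξ₀ hξ₀)] with y hy
      exact (himg y hy).2
    have hinv : HasDerivAt invg (deriv g (q ξ₀))⁻¹ (ψ ξ₀) :=
      HasDerivAt.of_local_left_inverse (hcont _ (hmaps ξ₀ hξ₀)) hgat hne hev
    exact hinv.differentiableAt.comp ξ₀ (hψd.differentiableAt (isOpen_ball.mem_nhds hξ₀))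
  have hqdOn : DifferentiableOn ℂ q (ball (0:ℂ) 1) := by
    by_cases hconst : ∀ ξ ∈ ball (0:ℂ) 1, ψ ξ = ψ 0
    · exact (differentiableOn_const (invg (ψ 0))).congr
        (fun ξ hξ => by simp only [hqdef, hconst ξ hξ])
    · push_neg at hconst
      obtain ⟨ξ₁, hξ₁, hne1⟩ := hconst
      have hψa : AnalyticOnNhd ℂ ψ (ball (0:ℂ) 1) := hψd.analyticOnNhd isOpen_ball
      intro ξ₀ hξ₀
      by_cases hd0 : deriv g (q ξ₀) = 0
      · have hevne : ∀ᶠ ξ in 𝓝[≠] ξ₀, ψ ξ ≠ ψ ξ₀ := by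
          rcases (hψa ξ₀ hξ₀).eventually_eq_or_eventually_ne
              (analyticAt_const (v := ψ ξ₀)) with hcase | hcase
          · exfalso
            have heq : EqOn ψ (fun _ => ψ ξ₀) (ball (0:ℂ) 1) :=
              hψa.eqOn_of_preconnected_of_eventuallyEq analyticOnNhd_const
                (convex_ball 0 1).isPreconnected hξ₀ hcase
            exact hne1 (by rw [heq hξ₁, heq h0mem])
          · exact hcase
        have hdga : AnalyticOnNhd ℂ (deriv g) (ball (0:ℂ) 1) := hGa.deriv
        have hgev : ∀ᶠ ζ in 𝓝[≠] (q ξ₀), deriv g ζ ≠ 0 := by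
          rcases (hdga _ (hqmem ξ₀ hξ₀).1).eventually_eq_zero_or_eventually_ne_zero
            with hcase | hcase
          · exfalso
            have heq : EqOn (deriv g) (fun _ => 0) (ball (0:ℂ) 1) :=
              hdga.eqOn_of_preconnected_of_eventuallyEq analyticOnNhd_const
                (convex_ball 0 1).isPreconnected (hqmem ξ₀ hξ₀).1 hcase
            have hgconst : g 0 = g (1/2) := by
              apply (convex_ball (0:ℂ) 1).is_const_of_fderivWithin_eq_zero hgd _ h0mem hhalf
              intro x hx
              rw [fderivWithin_of_isOpen isOpen_ball hx]
              apply ContinuousLinearMap.ext_ring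
              rw [ContinuousLinearMap.zero_apply]
              have h1 : fderiv ℂ g x 1 = deriv g x := rfl
              rw [h1]
              exact heq hx
            exact hne2 (hginj h0mem hhalf hgconst)
          · exact hcase
        have hballev : ∀ᶠ ξ in 𝓝[≠] ξ₀, ξ ∈ ball (0:ℂ) 1 :=
          Filter.Eventually.filter_mono nhdsWithin_le_nhds
            (isOpen_ball.eventually_mem hξ₀)
        have htendq : Tendsto q (𝓝[≠] ξ₀) (𝓝[≠] (q ξ₀)) := by
          rw [tendsto_nhdsWithin_iff]
          constructor
          · exact (hqc ξ₀ hξ₀).tendsto.mono_left nhdsWithin_le_nhds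
          · filter_upwards [hevne, hballev] with ξ h1 h2
            intro hqeq
            exact h1 (by rw [← (hqmem ξ h2).2, hqeq, (hqmem ξ₀ hξ₀).2])
        have hevd : ∀ᶠ ξ in 𝓝[≠] ξ₀, DifferentiableAt ℂ q ξ := by
          filter_upwards [htendq.eventually hgev, hballev] with ξ h1 h2
          exact hqdiff ξ h2 h1
        rw [eventually_nhdsWithin_iff] at hevd
        obtain ⟨s, hsmem, hs⟩ := Filter.eventually_iff_exists_mem.1 hevd
        have hto : interior s ∈ 𝓝 ξ₀ := interior_mem_nhds.2 hsmem
        have hdOn : DifferentiableOn ℂ q (interior s \ {ξ₀}) := fun x hx =>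
          (hs x (interior_subset hx.1) hx.2).differentiableWithinAt
        exact (((Complex.differentiableOn_compl_singleton_and_continuousAt_iff hto).1
          ⟨hdOn, hqc ξ₀ hξ₀⟩).differentiableAt hto).differentiableWithinAt
      · exact (hqdiff ξ₀ hξ₀ hd0).differentiableWithinAt
  intro ξ hξ
  have habs : ‖q ξ‖ ≤ ‖ξ‖ :=
    Complex.norm_le_norm_of_mapsTo_ball hqdOn
      (fun x hx => ball_subset_closedBall (hqmem x hx).1) hq0
      (mem_ball_zero_iff.1 hξ)
  exact ⟨q ξ, (hqmem ξ hξ).1, (hqmem ξ hξ).2, habs⟩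

end Aux

theorem statement0 {n : ℕ} (hn : 1 ≤ n) (g : ℂ → ℂ) (hg : Admissible g)
    (α β : ℝ) (hα : α ∈ Set.Ico (0:ℝ) 1) (hβ : β ∈ Set.Ioo (-(Real.pi/2)) (Real.pi/2))
    (h : Cn n → Cn n) (hh : MtildeMem n g α β h) :
    ∀ z ∈ ball (0 : Cn n) 1,
      (1 - α) * Real.cos β * ‖z‖^2 *
          (min (g (‖z‖:ℂ)).re (g (-(‖z‖:ℂ))).re + α/(1-α))
        ≤ ((inner ℂ z (Complex.exp (-(β:ℂ) * Complex.I) • h z) : ℂ)).re ∧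
      ((inner ℂ z (Complex.exp (-(β:ℂ) * Complex.I) • h z) : ℂ)).re
        ≤ (1 - α) * Real.cos β * ‖z‖^2 *
          (max (g (‖z‖:ℂ)).re (g (-(‖z‖:ℂ))).re + α/(1-α)) := by
  obtain ⟨hhd, hh0, hhJ, hhmem⟩ := hh
  obtain ⟨hα0, hα1⟩ := hα
  have hαC : (1 - (α:ℂ)) ≠ 0 := by
    rw [show (1 - (α:ℂ)) = ((1 - α : ℝ) : ℂ) by push_cast; ring]
    exact Complex.ofReal_ne_zero.2 (by linarith)
  have hcos : 0 < Real.cos β := Real.cos_pos_of_mem_Ioo hβ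
  intro z hz
  rcases eq_or_ne z 0 with rfl | hz0
  · simp
  · have hr0 : 0 < ‖z‖ := norm_pos_iff.2 hz0
    have hr1 : ‖z‖ < 1 := mem_ball_zero_iff.1 hz
    set r : ℝ := ‖z‖ with hrdef
    have hrC : ((r:ℂ)) ≠ 0 := Complex.ofReal_ne_zero.2 hr0.ne'
    have hnr : ‖((r:ℂ))‖ = r := by rw [Complex.norm_real, Real.norm_eq_abs, abs_of_pos hr0]
    set u : Cn n := ((r:ℂ))⁻¹ • z with hudef
    have hu1 : ‖u‖ = 1 := by
      rw [hudef, norm_smul, norm_inv, hnr, inv_mul_cancel₀ hr0.ne']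
    have hru : ((r:ℂ)) • u = z := by
      rw [hudef, smul_smul, mul_inv_cancel₀ hrC, one_smul]
    have hune : u ≠ 0 := by
      intro hc
      rw [hc, norm_zero] at hu1
      norm_num at hu1
    set t : ℝ := Real.tan β with htdef
    set A : ℂ := (-(α:ℂ) + Complex.I * (t:ℂ)) / (1 - (α:ℂ)) with hAdef
    set B : ℂ := (1 - Complex.I * (t:ℂ)) / (1 - (α:ℂ)) with hBdef
    set H : ℂ → ℂ := fun ξ => (inner ℂ u (h (ξ • u)) : ℂ) with hHdef
    set ψ : ℂ → ℂ := fun ξ => A + B * dslope H 0 ξ with hψdef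
    have hmapball : ∀ ξ : ℂ, ξ ∈ ball (0:ℂ) 1 → ξ • u ∈ ball (0:Cn n) 1 := by
      intro ξ hξ
      rw [mem_ball_zero_iff, norm_smul, hu1, mul_one]
      exact mem_ball_zero_iff.1 hξ
    have hH0 : H 0 = 0 := by
      simp only [hHdef, zero_smul, hh0, inner_zero_right]
    have hHd : DifferentiableOn ℂ H (ball (0:ℂ) 1) := by
      have h1 : DifferentiableOn ℂ (fun ξ : ℂ => h (ξ • u)) (ball (0:ℂ) 1) :=
        hhd.comp ((differentiable_id.smul_const u).differentiableOn) hmapball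
      have h2 := (innerSL ℂ u).differentiable.comp_differentiableOn h1
      exact h2.congr (fun ξ _ => by simp [hHdef])
    have hH'0 : deriv H 0 = 1 := by
      have l1 : HasDerivAt (fun ξ : ℂ => ξ • u) u 0 := by
        simpa using (hasDerivAt_id (0:ℂ)).smul_const u
      have l2 : HasFDerivAt h (ContinuousLinearMap.id ℂ (Cn n)) ((0:ℂ) • u) := by
        rw [zero_smul]
        have := (hhd.differentiableAt (isOpen_ball.mem_nhds (mem_ball_self one_pos))).hasFDerivAt
        rwa [hhJ] at this
      have l3 : HasDerivAt (fun ξ : ℂ => h (ξ • u)) u 0 := by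
        exact l2.comp_hasDerivAt 0 l1
      have l4 : HasDerivAt (fun ξ : ℂ => (innerSL ℂ u) (h (ξ • u))) ((innerSL ℂ u) u) 0 :=
        (innerSL ℂ u).hasFDerivAt.comp_hasDerivAt 0 l3
      have l5 : HasDerivAt H ((innerSL ℂ u) u) 0 :=
        l4.congr_of_eventuallyEq (Filter.Eventually.of_forall (fun ξ => by simp [hHdef]))
      rw [l5.deriv]
      simp only [innerSL_apply_apply]
      rw [inner_self_eq_norm_sq_to_K, hu1]
      norm_num
    have hψd : DifferentiableOn ℂ ψ (ball (0:ℂ) 1) := by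
      apply (differentiableOn_const A).add
      apply (differentiableOn_const B).mul
      exact (Complex.differentiableOn_dslope
        (isOpen_ball.mem_nhds (mem_ball_self one_pos))).2 hHd
    have hψ0 : ψ 0 = g 0 := by
      simp only [hψdef]
      rw [dslope_same, hH'0, mul_one, hg.one, hAdef, hBdef, ← add_div]
      rw [show -(α:ℂ) + Complex.I * (t:ℂ) + (1 - Complex.I * (t:ℂ)) = 1 - (α:ℂ) by ring]
      exact div_self hαC
    have hmapsψ : ∀ ξ ∈ ball (0:ℂ) 1, ψ ξ ∈ g '' ball (0:ℂ) 1 := by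
      intro ξ hξ
      rcases eq_or_ne ξ 0 with rfl | hξ0
      · rw [hψ0]
        exact ⟨0, mem_ball_self one_pos, rfl⟩
      · have hmem := hhmem (ξ • u) (hmapball ξ hξ) (smul_ne_zero hξ0 hune)
        have hconjne : (starRingEnd ℂ) ξ ≠ 0 := by
          simpa using hξ0
        have hkey : dslope H 0 ξ = (inner ℂ (ξ • u) (h (ξ • u)) : ℂ) / (‖ξ • u‖:ℂ)^2 := by
          rw [dslope_of_ne _ hξ0, slope_def_field, hH0, sub_zero, sub_zero]
          rw [norm_smul, hu1, mul_one, inner_smul_left]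
          rw [show ((‖ξ‖:ℝ):ℂ)^2 = ξ * (starRingEnd ℂ) ξ by
            rw [Complex.mul_conj, Complex.normSq_eq_norm_sq]
            push_cast
            ring]
          rw [hHdef]
          field_simp
        simp only [hψdef]
        rw [hkey]
        exact hmem
    obtain ⟨ζ₀, hζball, hgζ, hζle⟩ :=
      subordination g ψ hg.holo hg.inj hψd hψ0 hmapsψ ((r:ℂ))
        (by rw [mem_ball_zero_iff, hnr]; exact hr1)
    have hζr : ‖ζ₀‖ ≤ r := by
      rwa [hnr] at hζle
    have hm : min (g (r:ℂ)).re (g (-(r:ℂ))).re ≤ (g ζ₀).re :=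
      reMin_of_frontier g hg.holo hr0 hr1 (fun ζ hζ => hg.min_le r hr0 hr1 ζ hζ) hζr
    have hM : (g ζ₀).re ≤ max (g (r:ℂ)).re (g (-(r:ℂ))).re :=
      reMax_of_frontier g hg.holo hr0 hr1 (fun ζ hζ => hg.le_max r hr0 hr1 ζ hζ) hζr
    set c : ℂ := (inner ℂ z (h z) : ℂ) with hcdef
    have hgval : g ζ₀ = A + B * (c / (r:ℂ)^2) := by
      rw [hgζ]
      simp only [hψdef]
      congr 2
      rw [dslope_of_ne _ hrC, slope_def_field, hH0, sub_zero, sub_zero]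
      simp only [hHdef]
      rw [hru]
      have hzc : c = (r:ℂ) * (inner ℂ u (h z) : ℂ) := by
        rw [hcdef]
        conv_lhs => rw [← hru]
        rw [inner_smul_left, Complex.conj_ofReal, hru]
      rw [hzc]
      field_simp
    have hItne : (1 - Complex.I * (t:ℂ)) ≠ 0 := by
      intro hc
      have := congrArg Complex.re hc
      simp at this
    have hBne : B ≠ 0 := div_ne_zero hItne hαC
    have hc_eq : c = (g ζ₀ - A) * (r:ℂ)^2 / B := by
      rw [hgval]
      field_simp
      ring
    have hexp : Complex.exp (-(β:ℂ) * Complex.I) = ((Real.cos β : ℂ)) * (1 - Complex.I * (t:ℂ)) := by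
      have hct : Real.cos β * t = Real.sin β := by
        rw [htdef, Real.tan_eq_sin_div_cos]
        field_simp
      rw [show -(β:ℂ) * Complex.I = ((-β : ℝ):ℂ) * Complex.I by push_cast; ring]
      rw [Complex.exp_mul_I, ← Complex.ofReal_cos, ← Complex.ofReal_sin,
        Real.cos_neg, Real.sin_neg, ← hct]
      push_cast
      ring
    have hinner : (inner ℂ z (Complex.exp (-(β:ℂ) * Complex.I) • h z) : ℂ) =
        Complex.exp (-(β:ℂ) * Complex.I) * c := by
      rw [hcdef]
      exact inner_smul_right _ _ _
    have hmain : (inner ℂ z (Complex.exp (-(β:ℂ) * Complex.I) • h z) : ℂ) =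
        (((1 - α) * Real.cos β * r^2 : ℝ) : ℂ) * (g ζ₀ - A) := by
      rw [hinner, hc_eq, hexp, hBdef]
      field_simp
      push_cast
      ring
    have hre : ((inner ℂ z (Complex.exp (-(β:ℂ) * Complex.I) • h z) : ℂ)).re =
        (1 - α) * Real.cos β * r^2 * ((g ζ₀).re + α/(1-α)) := by
      rw [hmain, Complex.re_ofReal_mul, Complex.sub_re]
      have hAre : A.re = -(α/(1-α)) := by
        rw [hAdef, show (1 - (α:ℂ)) = ((1-α:ℝ):ℂ) by push_cast; ring,
          Complex.div_ofReal_re]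
        simp [neg_div]
      rw [hAre]
      ring
    have hK : (0:ℝ) ≤ (1 - α) * Real.cos β * r^2 :=
      mul_nonneg (mul_nonneg (by linarith) hcos.le) (sq_nonneg r)
    constructor
    · rw [hre]
      exact mul_le_mul_of_nonneg_left (by linarith) hK
    · rw [hre]
      exact mul_le_mul_of_nonneg_left (by linarith) hK
end

section
/- Let n ≥ 1, let −1 ≤ A < B ≤ 1 and g(ζ) = (1 + Aζ)/(1 + Bζ), let α ∈ [0,1), β ∈ (−π/2, π/2), and let h ∈ M̃_g^{α,β}. Then for every z ∈ 𝔹ⁿ one has ((1 + A‖z‖)/(1 + B‖z‖) − (1/(1−α))·√(α² + tan²β))·(1−α)·cos β·‖z‖² ≤ |⟨h(z), z⟩| ≤ ((1 − A‖z‖)/(1 − B‖z‖) + (1/(1−α))·√(α² + tan²β))·(1−α)·cos β·‖z‖². -/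
open Complex Metric

lemma mobius_disk_bound (A B r : ℝ) (hA : -1 ≤ A) (hAB : A < B) (hB : B ≤ 1)
    (hr0 : 0 ≤ r) (hr1 : r < 1) (w : ℂ)
    (hw : ‖(w - 1)‖ ≤ r * ‖((A:ℂ) - (B:ℂ) * w)‖) :
    (1 + A * r)/(1 + B * r) ≤ ‖w‖ ∧
    ‖w‖ ≤ (1 - A * r)/(1 - B * r) := by
  set a := ‖w‖ with ha
  have ha0 : 0 ≤ a := norm_nonneg w
  have hx : w.re ≤ a := Complex.re_le_norm w
  have hsq : ‖(w - 1)‖ ^ 2 ≤ r ^ 2 * ‖((A:ℂ) - (B:ℂ) * w)‖ ^ 2 := by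
    have := mul_le_mul hw hw (norm_nonneg _) (by positivity)
    nlinarith [this]
  have e1 : ‖(w - 1)‖ ^ 2 = (w.re - 1)^2 + w.im^2 := by
    rw [Complex.sq_norm]; simp [Complex.normSq_apply]; ring
  have e2 : ‖((A:ℂ) - (B:ℂ) * w)‖ ^ 2 = (A - B * w.re)^2 + (B * w.im)^2 := by
    rw [Complex.sq_norm]; simp [Complex.normSq_apply]; ring
  have ea : a ^ 2 = w.re^2 + w.im^2 := by
    rw [ha, Complex.sq_norm]; simp [Complex.normSq_apply]; ring
  rw [e1, e2] at hsq
  have hA1 : A ≤ 1 := le_of_lt (lt_of_lt_of_le hAB hB)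
  have hB1 : -1 ≤ B := le_trans hA (le_of_lt hAB)
  have hbr_ub : B*r ≤ r := by simpa using mul_le_mul_of_nonneg_right hB hr0
  have hbr_lb : -r ≤ B*r := by
    have := mul_le_mul_of_nonneg_right hB1 hr0; linarith
  have hBr1 : 0 < 1 + B * r := by linarith
  have hBr2 : 0 < 1 - B * r := by linarith
  have hr2 : r^2 ≤ 1 := by nlinarith [sq_nonneg r, sq_nonneg (1-r)]
  have hABle : A*B ≤ 1 := by
    nlinarith [mul_nonneg (by linarith : (0:ℝ) ≤ 1-A) (by linarith : (0:ℝ) ≤ 1+B),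
      mul_nonneg (by linarith : (0:ℝ) ≤ 1+A) (by linarith : (0:ℝ) ≤ 1-B)]
  have hAB2 : 0 ≤ 1 - r^2*(A*B) := by
    nlinarith [mul_nonneg (sq_nonneg r) (by linarith : (0:ℝ) ≤ 1 - A*B)]
  have hmul : (1 - r^2*(A*B)) * w.re ≤ (1 - r^2*(A*B)) * a :=
    mul_le_mul_of_nonneg_left hx hAB2
  have key : (1-r^2*B^2)*(w.re^2+w.im^2) - 2*((1-r^2*(A*B))*w.re) + (1-r^2*A^2) ≤ 0 := by
    nlinarith [hsq]
  have ea2 : (1-r^2*B^2)*a^2 = (1-r^2*B^2)*(w.re^2+w.im^2) := by rw [ea]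
  have H : ((1 + B*r) * a - (1 + A*r)) * ((1 - B*r) * a - (1 - A*r)) ≤ 0 := by
    have hexp : ((1 + B*r) * a - (1 + A*r)) * ((1 - B*r) * a - (1 - A*r))
        = (1-r^2*B^2)*a^2 - 2*((1-r^2*(A*B))*a) + (1-r^2*A^2) := by ring
    rw [hexp]
    linarith [key, hmul, ea2]
  have hrBA : 0 ≤ r * (B - A) := mul_nonneg hr0 (by linarith)
  have id1 : ((1 - B*r)*a - (1-A*r)) * (1 + B*r)
      = ((1 + B*r)*a - (1+A*r)) * (1 - B*r) - 2*(r*(B-A)) := by ring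
  constructor
  · rw [div_le_iff₀ hBr1]
    by_contra hcon
    push_neg at hcon
    have hs1 : (1 + B*r)*a - (1+A*r) < 0 := by linarith
    have t1 : ((1 + B*r)*a - (1+A*r)) * (1 - B*r) < 0 :=
      mul_neg_of_neg_of_pos hs1 hBr2
    have hs2 : (1 - B*r)*a - (1-A*r) < 0 := by
      by_contra hs2
      push_neg at hs2
      have h0 : 0 ≤ ((1 - B*r)*a - (1-A*r)) * (1 + B*r) := mul_nonneg hs2 hBr1.le
      linarith [t1, h0, id1, hrBA]
    exact absurd H (not_le.mpr (mul_pos_of_neg_of_neg hs1 hs2))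
  · rw [le_div_iff₀ hBr2]
    by_contra hcon
    push_neg at hcon
    have hs2 : 0 < (1 - B*r)*a - (1-A*r) := by linarith
    have t1 : 0 < ((1 - B*r)*a - (1-A*r)) * (1 + B*r) := mul_pos hs2 hBr1
    have hs1 : 0 < (1 + B*r)*a - (1+A*r) := by
      by_contra hs1
      push_neg at hs1
      have h0 : ((1 + B*r)*a - (1+A*r)) * (1 - B*r) ≤ 0 :=
        mul_nonpos_of_nonpos_of_nonneg hs1 hBr2.le
      linarith [t1, h0, id1, hrBA]
    exact absurd H (not_le.mpr (mul_pos hs1 hs2))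

-- g-inverse computation
lemma ginv_eq (A B : ℝ) (hA : -1 ≤ A) (hAB : A < B) (hB : B ≤ 1)
    (g : ℂ → ℂ) (hg : ∀ ζ, g ζ = (1 + (A:ℂ) * ζ) / (1 + (B:ℂ) * ζ))
    (ξ : ℂ) (hξ : ξ ∈ ball (0:ℂ) 1) :
    (A:ℂ) - (B:ℂ) * g ξ ≠ 0 ∧ g ξ - 1 = ξ * ((A:ℂ) - (B:ℂ) * g ξ) := by
  have hξ1 : ‖ξ‖ < 1 := by simpa [Metric.mem_ball] using hξ
  have hden : (1 + (B:ℂ) * ξ) ≠ 0 := by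
    intro hc
    have h1 : (B:ℂ) * ξ = -1 := by linear_combination hc
    have : ‖((B:ℂ) * ξ)‖ = 1 := by rw [h1]; simp
    rw [norm_mul] at this
    have hBle : ‖(B:ℂ)‖ ≤ 1 := by
      rw [Complex.norm_real, Real.norm_eq_abs]; rw [abs_le]; constructor <;> linarith
    nlinarith [norm_nonneg ξ, norm_nonneg (B:ℂ)]
  have hABne : (A:ℂ) - (B:ℂ) ≠ 0 := by
    intro hc
    have : (A:ℝ) = B := by exact_mod_cast sub_eq_zero.mp hc
    linarith
  have e1 : (A:ℂ) - (B:ℂ) * g ξ = ((A:ℂ) - (B:ℂ)) / (1 + (B:ℂ) * ξ) := by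
    rw [hg]; field_simp; ring
  have e2 : g ξ - 1 = (((A:ℂ) - (B:ℂ)) * ξ) / (1 + (B:ℂ) * ξ) := by
    rw [hg, div_sub_one hden]; congr 1; ring
  refine ⟨by rw [e1]; exact div_ne_zero hABne hden, ?_⟩
  rw [e1, e2]; field_simp

theorem statement1 {n : ℕ} (hn : 1 ≤ n) (A B : ℝ) (hA : -1 ≤ A) (hAB : A < B) (hB : B ≤ 1)
    (g : ℂ → ℂ) (hg : ∀ ζ, g ζ = (1 + (A:ℂ) * ζ) / (1 + (B:ℂ) * ζ))
    (α β : ℝ) (hα : α ∈ Set.Ico (0:ℝ) 1) (hβ : β ∈ Set.Ioo (-(Real.pi/2)) (Real.pi/2))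
    (h : Cn n → Cn n) (hh : MtildeMem n g α β h) :
    ∀ z ∈ ball (0 : Cn n) 1,
      ((1 + A * ‖z‖)/(1 + B * ‖z‖) - (1/(1-α)) * Real.sqrt (α^2 + Real.tan β ^ 2)) *
          ((1-α) * Real.cos β * ‖z‖^2)
        ≤ ‖(inner ℂ z (h z) : ℂ)‖ ∧
      ‖(inner ℂ z (h z) : ℂ)‖
        ≤ ((1 - A * ‖z‖)/(1 - B * ‖z‖) + (1/(1-α)) * Real.sqrt (α^2 + Real.tan β ^ 2)) *
          ((1-α) * Real.cos β * ‖z‖^2) := by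
  obtain ⟨hdiff, h0, hderiv, hmem⟩ := hh
  obtain ⟨hα0, hα1⟩ := hα
  have hcos : 0 < Real.cos β := Real.cos_pos_of_mem_Ioo hβ
  have h1α : (0:ℝ) < 1 - α := by linarith
  have h1αC : (1 - (α:ℂ)) ≠ 0 := by
    have : ((1 - α : ℝ) : ℂ) ≠ 0 := Complex.ofReal_ne_zero.mpr h1α.ne'
    push_cast at this; exact this
  set t := Real.tan β with ht
  set c₀ : ℂ := (-(α:ℂ) + Complex.I * (t:ℂ)) / (1 - (α:ℂ)) with hc₀
  set c₁ : ℂ := (1 - Complex.I * (t:ℂ)) / (1 - (α:ℂ)) with hc₁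
  have hc₁ne : c₁ ≠ 0 := by
    apply div_ne_zero _ h1αC
    intro hc
    have h1 := congrArg Complex.re hc
    simp at h1
  -- absolute values of the constants
  have habs1 : ‖(1 - Complex.I * (t:ℂ))‖ = (Real.cos β)⁻¹ := by
    have hs : Real.sqrt (1 + t^2) = (Real.cos β)⁻¹ := by
      rw [← Real.inv_sqrt_one_add_tan_sq hcos, inv_inv, ht]
    rw [← hs, Complex.norm_def]
    congr 1
    simp [Complex.normSq_apply]
    ring
  have habsc₁ : ‖c₁‖ = (Real.cos β)⁻¹ / (1 - α) := by
    rw [hc₁, norm_div, habs1]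
    congr 1
    have : (1 - (α:ℂ)) = ((1 - α : ℝ) : ℂ) := by push_cast; ring
    rw [this, Complex.norm_real, Real.norm_eq_abs, abs_of_pos h1α]
  have habsc₀ : ‖c₀‖ = Real.sqrt (α^2 + t^2) / (1 - α) := by
    rw [hc₀, norm_div]
    congr 1
    · rw [Complex.norm_def]
      congr 1
      simp [Complex.normSq_apply]
      ring
    · have : (1 - (α:ℂ)) = ((1 - α : ℝ) : ℂ) := by push_cast; ring
      rw [this, Complex.norm_real, Real.norm_eq_abs, abs_of_pos h1α]
  intro z hz
  by_cases hz0 : z = 0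
  · subst hz0
    simp
  -- setup
  have hzr : (0:ℝ) < ‖z‖ := norm_pos_iff.mpr hz0
  have hzr1 : ‖z‖ < 1 := by simpa [mem_ball_zero_iff] using hz
  set r : ℝ := ‖z‖ with hr
  have hrC : ((r:ℂ)) ≠ 0 := Complex.ofReal_ne_zero.mpr hzr.ne'
  set u : Cn n := ((r:ℂ))⁻¹ • z with hu
  have hnu : ‖u‖ = 1 := by
    rw [hu, norm_smul]
    simp [Complex.norm_real, Real.norm_eq_abs, abs_of_pos hzr]
    exact inv_mul_cancel₀ hzr.ne'
  have hru : ((r:ℂ)) • u = z := by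
    rw [hu, smul_smul, mul_inv_cancel₀ hrC, one_smul]
  have hnsmul : ∀ ζ : ℂ, ‖ζ • u‖ = ‖ζ‖ := by
    intro ζ; rw [norm_smul, hnu, mul_one]
  -- F and q
  set F : ℂ → ℂ := fun ζ => (inner ℂ u (h (ζ • u)) : ℂ) with hF
  have hmaps : Set.MapsTo (fun ζ : ℂ => ζ • u) (ball (0:ℂ) 1) (ball (0 : Cn n) 1) := by
    intro ζ hζ
    rw [mem_ball_zero_iff, hnsmul]
    simpa [Metric.mem_ball] using hζ
  have hFdiff : DifferentiableOn ℂ F (ball (0:ℂ) 1) := by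
    apply (innerSL ℂ u).differentiable.comp_differentiableOn
    exact hdiff.comp (differentiable_id.smul_const u).differentiableOn hmaps
  have hF0 : F 0 = 0 := by simp [hF, h0]
  set q : ℂ → ℂ := dslope F 0 with hq
  have hqdiff : DifferentiableOn ℂ q (ball (0:ℂ) 1) :=
    (differentiableOn_dslope (isOpen_ball.mem_nhds (mem_ball_self one_pos))).2 hFdiff
  have hq0 : q 0 = 1 := by
    rw [hq, dslope_same]
    have hm : HasDerivAt (fun ζ : ℂ => ζ • u) u 0 := by
      simpa using (hasDerivAt_id (0:ℂ)).smul_const u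
    have hda : DifferentiableAt ℂ h 0 :=
      hdiff.differentiableAt (isOpen_ball.mem_nhds (mem_ball_self one_pos))
    have hhd : HasFDerivAt h (ContinuousLinearMap.id ℂ (Cn n)) ((0:ℂ) • u) := by
      rw [zero_smul]
      rw [← hderiv]
      exact hda.hasFDerivAt
    have hc : HasDerivAt (fun ζ : ℂ => h (ζ • u)) (ContinuousLinearMap.id ℂ (Cn n) u) 0 :=
      hhd.comp_hasDerivAt 0 hm
    have hFd : HasDerivAt F ((innerSL ℂ u) (ContinuousLinearMap.id ℂ (Cn n) u)) 0 :=
      ((innerSL ℂ u).hasFDerivAt.comp_hasDerivAt 0 hc)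
    rw [hFd.deriv]
    simp only [ContinuousLinearMap.id_apply, innerSL_apply_apply]
    rw [inner_self_eq_norm_sq_to_K, hnu]
    norm_num
  have hqval : ∀ ζ : ℂ, ζ ≠ 0 → q ζ = (inner ℂ (ζ • u) (h (ζ • u)) : ℂ) / (‖ζ • u‖:ℂ)^2 := by
    intro ζ hζ
    rw [hq, dslope_of_ne _ hζ, slope_def_field]
    rw [hF0, sub_zero, hnsmul ζ]
    rw [inner_smul_left]
    have hcsq : ((‖ζ‖ : ℝ) : ℂ)^2 = (starRingEnd ℂ) ζ * ζ := by
      rw [← Complex.ofReal_pow, Complex.sq_norm, Complex.normSq_eq_conj_mul_self]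
    rw [hcsq]
    have hζc : (starRingEnd ℂ) ζ ≠ 0 := by simpa using hζ
    rw [mul_div_mul_left _ _ hζc]
    simp only [sub_zero]
    rfl
  -- φ and ψ
  set φ : ℂ → ℂ := fun ζ => c₀ + c₁ * q ζ with hφ
  have hφ0 : φ 0 = 1 := by
    rw [hφ]; simp only [hq0, mul_one, hc₀, hc₁]
    field_simp
    ring
  have hφmem : ∀ ζ ∈ ball (0:ℂ) 1, φ ζ ∈ g '' ball (0:ℂ) 1 := by
    intro ζ hζ
    by_cases hζ0 : ζ = 0
    · subst hζ0
      rw [hφ0]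
      exact ⟨0, mem_ball_self one_pos, by rw [hg]; simp⟩
    · have hmem' := hmem (ζ • u) (hmaps hζ) (by
        intro hc
        apply hζ0
        have := congrArg norm hc
        rw [hnsmul] at this
        simpa using this)
      simp only [hφ]
      rw [hqval ζ hζ0]
      exact hmem'
  set ψ : ℂ → ℂ := fun ζ => (φ ζ - 1) / ((A:ℂ) - (B:ℂ) * φ ζ) with hψ
  have hψball : ∀ ζ ∈ ball (0:ℂ) 1, ψ ζ ∈ ball (0:ℂ) 1 ∧ ((A:ℂ) - (B:ℂ) * φ ζ) ≠ 0 := by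
    intro ζ hζ
    obtain ⟨ξ, hξ, hgξ⟩ := hφmem ζ hζ
    obtain ⟨hne, heq⟩ := ginv_eq A B hA hAB hB g hg ξ hξ
    rw [hgξ] at hne heq
    have : ψ ζ = ξ := by
      rw [hψ]; simp only []
      rw [heq, mul_div_assoc, div_self hne, mul_one]
    exact ⟨by rw [this]; exact hξ, hne⟩
  have hψdiff : DifferentiableOn ℂ ψ (ball (0:ℂ) 1) := by
    have hφdiff : DifferentiableOn ℂ φ (ball (0:ℂ) 1) :=
      (differentiableOn_const _).add ((differentiableOn_const _).mul hqdiff)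
    exact (hφdiff.sub (differentiableOn_const 1)).div
      ((differentiableOn_const _).sub ((differentiableOn_const _).mul hφdiff))
      (fun ζ hζ => (hψball ζ hζ).2)
  have hψ0 : ψ 0 = 0 := by rw [hψ]; simp only [hφ0]; simp
  -- Schwarz
  have hrball : ((r:ℂ)) ∈ ball (0:ℂ) 1 := by
    simp [Metric.mem_ball, Complex.norm_real, Real.norm_eq_abs, abs_of_pos hzr]
    exact hzr1
  have hschwarz : ‖(ψ (r:ℂ))‖ ≤ r := by
    have := Complex.norm_le_norm_of_mapsTo_ball hψdiff
      (fun ζ hζ => ball_subset_closedBall (hψball ζ hζ).1) hψ0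
      (show ‖((r:ℂ))‖ < 1 by rwa [Complex.norm_real, Real.norm_eq_abs, abs_of_pos hzr])
    rwa [Complex.norm_real, Real.norm_eq_abs, abs_of_pos hzr] at this
  -- the value w
  set w : ℂ := φ (r:ℂ) with hw
  have hwb : ‖(w - 1)‖ ≤ r * ‖((A:ℂ) - (B:ℂ) * w)‖ := by
    obtain ⟨ξ, hξ, hgξ⟩ := hφmem (r:ℂ) hrball
    obtain ⟨hne, heq⟩ := ginv_eq A B hA hAB hB g hg ξ hξ
    rw [hgξ] at hne heq
    have hψr : ψ (r:ℂ) = ξ := by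
      rw [hψ]; simp only []
      rw [← hw, heq, mul_div_assoc, div_self hne, mul_one]
    rw [← hw] at heq
    rw [heq, norm_mul]
    have : ‖ξ‖ ≤ r := by rw [← hψr]; exact hschwarz
    exact mul_le_mul_of_nonneg_right this (norm_nonneg _)
  have hbound := mobius_disk_bound A B r hA hAB hB hzr.le hzr1 w hwb
  -- express inner product via w
  have hqr : q (r:ℂ) = (inner ℂ z (h z) : ℂ) / ((r:ℂ))^2 := by
    rw [hqval (r:ℂ) hrC, hru, ← hr]
  have hinner : (inner ℂ z (h z) : ℂ) = (w - c₀) / c₁ * ((r:ℂ))^2 := by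
    have h1 : w = c₀ + c₁ * ((inner ℂ z (h z) : ℂ) / ((r:ℂ))^2) := by
      rw [hw]; simp only [hφ]; rw [hqr]
    have h2 : w - c₀ = c₁ * ((inner ℂ z (h z) : ℂ) / ((r:ℂ))^2) := by rw [h1]; ring
    rw [h2, mul_comm c₁, mul_div_assoc, div_self hc₁ne, mul_one,
      div_mul_cancel₀ _ (pow_ne_zero 2 hrC)]
  -- final computation
  have habsinner : ‖(inner ℂ z (h z) : ℂ)‖
      = ‖(w - c₀)‖ * ((1-α) * Real.cos β * r^2) := by
    rw [hinner, norm_mul, norm_div, habsc₁]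
    rw [norm_pow, Complex.norm_real, Real.norm_eq_abs, abs_of_pos hzr]
    field_simp
  set S := Real.sqrt (α^2 + t^2) with hS
  have hKpos : (0:ℝ) < (1-α) * Real.cos β * r^2 := by positivity
  have htri1 : ‖w‖ - S / (1-α) ≤ ‖(w - c₀)‖ := by
    have h1 : ‖w‖ - ‖c₀‖ ≤ ‖(w - c₀)‖ := by
      have := norm_sub_norm_le w c₀
      simpa using this
    rw [habsc₀] at h1
    exact h1
  have htri2 : ‖(w - c₀)‖ ≤ ‖w‖ + S / (1-α) := by
    have h2 : ‖(w - c₀)‖ ≤ ‖w‖ + ‖c₀‖ := by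
      have := norm_sub_le w c₀
      simpa using this
    rw [habsc₀] at h2
    exact h2
  rw [habsinner]
  constructor
  · apply mul_le_mul_of_nonneg_right _ hKpos.le
    have : (1:ℝ)/(1-α) * S = S / (1-α) := by ring
    rw [this]
    linarith [hbound.1, htri1]
  · apply mul_le_mul_of_nonneg_right _ hKpos.le
    have : (1:ℝ)/(1-α) * S = S / (1-α) := by ring
    rw [this]
    linarith [hbound.2, htri2]
end

section
/- Let n ≥ 1, let −1 ≤ A < B ≤ 1, g(ζ) = (1 + Aζ)/(1 + Bζ), α ∈ [0,1), β ∈ (−π/2, π/2), and let F ∈ Ŝ_g^{α,β}(𝔹ⁿ). Then for every z ∈ 𝔹ⁿ, ‖[J_F(z)]⁻¹ F(z)‖ ≥ ((1 + A‖z‖)/(1 + B‖z‖) − (1/(1−α))·√(α² + tan²β))·(1−α)·cos β·‖z‖. -/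
open Complex Metric

lemma reBoundAux {A B r x y : ℝ} (hA : -1 ≤ A) (hAB : A < B) (hB : B ≤ 1)
    (hr1 : r < 1) (hx : x ≤ r) (hs : x*x + y*y ≤ r*r) :
    0 ≤ (r - x) + B*(r*x - (x*x+y*y)) := by
  nlinarith [mul_nonneg (by linarith : (0:ℝ) ≤ 1+B) (mul_nonneg (by linarith : (0:ℝ) ≤ 1-r) (by linarith : (0:ℝ) ≤ r-x)),
    mul_nonneg (by linarith : (0:ℝ) ≤ 1-B) (mul_nonneg (by nlinarith : (0:ℝ) ≤ 1-x) (by linarith : (0:ℝ) ≤ r-x)),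
    mul_nonneg (by linarith : (0:ℝ) ≤ 1+B) (by linarith : (0:ℝ) ≤ r*r - (x*x+y*y)),
    mul_nonneg (by linarith : (0:ℝ) ≤ 1-B) (by nlinarith : (0:ℝ) ≤ (x*x+y*y) - x*x)]

lemma reBound {A B r : ℝ} (hA : -1 ≤ A) (hAB : A < B) (hB : B ≤ 1)
    (hr0 : 0 ≤ r) (hr1 : r < 1) (ζ : ℂ) (hζ : ‖ζ‖ ≤ r) :
    (1 + A*r)/(1 + B*r) ≤ (((1:ℂ) + A*ζ)/(1 + B*ζ)).re := by
  obtain ⟨x, y⟩ := ζ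
  have hxy : ‖(⟨x,y⟩ : ℂ)‖ = Real.sqrt (x*x + y*y) := by
    simp [Complex.norm_def, Complex.normSq_apply]
  rw [hxy] at hζ
  have hsq : (0:ℝ) ≤ x*x + y*y := by nlinarith [mul_self_nonneg x, mul_self_nonneg y]
  have hs : x*x + y*y ≤ r*r := by
    nlinarith [Real.sq_sqrt hsq, Real.sqrt_nonneg (x*x+y*y)]
  have hx : x ≤ r := by
    nlinarith [Real.sqrt_le_sqrt (by nlinarith : x*x ≤ x*x+y*y), Real.sqrt_sq_eq_abs x,
      le_abs_self x, Real.sqrt_nonneg (x*x)]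
  have hy : -r ≤ x := by
    nlinarith [Real.sqrt_le_sqrt (by nlinarith : x*x ≤ x*x+y*y), Real.sqrt_sq_eq_abs x,
      neg_abs_le x, Real.sqrt_nonneg (x*x)]
  have hBr : 0 < 1 + B*r := by nlinarith
  have hd : 0 < (1+B*x)*(1+B*x) + (B*y)*(B*y) := by
    have h2 : -1 < B*x := by
      nlinarith [mul_nonneg (by linarith : (0:ℝ) ≤ 1+B) (by linarith : (0:ℝ) ≤ r+x),
        mul_nonneg (by linarith : (0:ℝ) ≤ 1-B) (by linarith : (0:ℝ) ≤ r-x)]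
    nlinarith [mul_self_nonneg (B*y), mul_self_nonneg (1+B*x)]
  have hre : ((⟨1+A*x, A*y⟩ : ℂ)/(⟨1+B*x, B*y⟩ : ℂ)).re
      = ((1+A*x)*(1+B*x) + (A*y)*(B*y)) / ((1+B*x)*(1+B*x) + (B*y)*(B*y)) := by
    rw [Complex.div_re]
    simp [Complex.normSq_apply]
    ring
  have hnum : ((1:ℂ) + A*⟨x,y⟩) = (⟨1+A*x, A*y⟩ : ℂ) := by
    apply Complex.ext <;> simp
  have hden : ((1:ℂ) + B*⟨x,y⟩) = (⟨1+B*x, B*y⟩ : ℂ) := by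
    apply Complex.ext <;> simp
  rw [hnum, hden, hre, div_le_div_iff₀ hBr hd]
  have hE := reBoundAux hA hAB hB hr1 hx hs
  nlinarith [mul_nonneg (by linarith : (0:ℝ) ≤ B - A) hE]



theorem statement8 {n : ℕ} (hn : 1 ≤ n) (A B : ℝ) (hA : -1 ≤ A) (hAB : A < B) (hB : B ≤ 1)
    (g : ℂ → ℂ) (hg : ∀ ζ, g ζ = (1 + (A:ℂ) * ζ) / (1 + (B:ℂ) * ζ))
    (α β : ℝ) (hα : α ∈ Set.Ico (0:ℝ) 1) (hβ : β ∈ Set.Ioo (-(Real.pi/2)) (Real.pi/2))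
    (F : Cn n → Cn n) (hF : ShatMem n g α β F) :
    ∀ z ∈ ball (0 : Cn n) 1, ∀ u : Cn n, fderiv ℂ F z u = F z →
      ((1 + A * ‖z‖)/(1 + B * ‖z‖) - (1/(1-α)) * Real.sqrt (α^2 + Real.tan β ^ 2)) *
          ((1-α) * Real.cos β * ‖z‖) ≤ ‖u‖ := by
  obtain ⟨hFd, hF0, hFd0, hFbij, w, hwF, hwdiff, hw0, hwd0, hwmem⟩ := hF
  intro z hz u hu
  have huw : u = w z := (hFbij z hz).injective (by rw [hu, hwF z hz])
  subst huw
  by_cases hz0 : z = 0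
  · simp [hz0]
  -- setup
  set t := Real.tan β with ht
  have hα0 : 0 ≤ α := hα.1
  have hα1 : α < 1 := hα.2
  have hαC : (1 : ℂ) - (α:ℂ) ≠ 0 := sub_ne_zero.2 (by exact_mod_cast hα.2.ne')
  have hcos : 0 < Real.cos β := Real.cos_pos_of_mem_Ioo hβ
  set r : ℝ := ‖z‖ with hr
  have hr0 : 0 < r := norm_pos_iff.2 hz0
  have hr1 : r < 1 := by simpa [hr] using mem_ball_zero_iff.1 hz
  set u₀ : Cn n := ((r⁻¹ : ℝ) : ℂ) • z with hu₀
  have hu₀n : ‖u₀‖ = 1 := by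
    rw [hu₀, norm_smul, Complex.norm_real, Real.norm_eq_abs,
      _root_.abs_of_nonneg (inv_nonneg.2 hr0.le), ← hr, inv_mul_cancel₀ hr0.ne']
  have hzu : ((r : ℝ) : ℂ) • u₀ = z := by
    rw [hu₀, smul_smul, ← Complex.ofReal_mul, mul_inv_cancel₀ hr0.ne', Complex.ofReal_one, one_smul]
  have hu₀0 : u₀ ≠ 0 := by
    intro h; rw [h, norm_zero] at hu₀n; exact one_ne_zero hu₀n.symm
  set c₁ : ℂ := (-(α:ℂ) + Complex.I * (t : ℂ)) / (1 - (α:ℂ)) with hc₁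
  set c₂ : ℂ := (1 - Complex.I * (t : ℂ)) / (1 - (α:ℂ)) with hc₂
  have hc₁₂ : c₁ + c₂ = 1 := by
    rw [hc₁, hc₂, ← add_div, div_eq_one_iff_eq hαC]; ring
  -- the function φ along the complex line
  set φ : ℂ → ℂ := fun ξ => (inner ℂ u₀ (w (ξ • u₀)) : ℂ) with hφ
  have hmaps : ∀ ξ : ℂ, ξ ∈ ball (0:ℂ) 1 → ξ • u₀ ∈ ball (0 : Cn n) 1 := by
    intro ξ hξ
    rw [mem_ball_zero_iff] at hξ ⊢
    rw [norm_smul, hu₀n, mul_one]; exact hξ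
  have hφeq : φ = fun ξ : ℂ => innerSL ℂ u₀ (w (ξ • u₀)) := by
    funext ξ; simp [hφ]
  have hφdiff : DifferentiableOn ℂ φ (ball (0:ℂ) 1) := by
    rw [hφeq]
    have h1 : DifferentiableOn ℂ (fun ξ : ℂ => ξ • u₀) (ball (0:ℂ) 1) :=
      (differentiable_id.smul_const u₀).differentiableOn
    have h2 : DifferentiableOn ℂ (fun ξ : ℂ => w (ξ • u₀)) (ball (0:ℂ) 1) :=
      hwdiff.comp h1 hmaps
    exact (innerSL ℂ u₀).differentiable.comp_differentiableOn h2
  have hφ0 : φ 0 = 0 := by simp [hφ, hw0]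
  have hφd : HasDerivAt φ 1 0 := by
    have hwat : HasFDerivAt w (ContinuousLinearMap.id ℂ (Cn n)) ((0:ℂ) • u₀) := by
      rw [zero_smul]
      have := (hwdiff.differentiableAt (ball_mem_nhds _ one_pos)).hasFDerivAt
      rwa [hwd0] at this
    have hline : HasDerivAt (fun ξ : ℂ => ξ • u₀) u₀ 0 := by
      simpa using (hasDerivAt_id (0:ℂ)).smul_const u₀
    have hcomp : HasDerivAt (fun ξ : ℂ => w (ξ • u₀)) u₀ 0 := by
      simpa [Function.comp_def] using hwat.comp_hasDerivAt 0 hline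
    have h4 : HasDerivAt (fun ξ : ℂ => innerSL ℂ u₀ (w (ξ • u₀))) (innerSL ℂ u₀ u₀) 0 :=
      (innerSL ℂ u₀).hasFDerivAt.comp_hasDerivAt 0 hcomp
    have h5 : (innerSL ℂ u₀ u₀ : ℂ) = 1 := by
      simp only [innerSL_apply_apply]
      rw [inner_self_eq_norm_sq_to_K, hu₀n]
      norm_num
    rw [hφeq]
    rwa [h5] at h4
  set Φ : ℂ → ℂ := dslope φ 0 with hΦ
  have hΦdiff : DifferentiableOn ℂ Φ (ball (0:ℂ) 1) :=
    (Complex.differentiableOn_dslope (ball_mem_nhds _ one_pos)).2 hφdiff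
  have hΦ0 : Φ 0 = 1 := by rw [hΦ, dslope_same]; exact hφd.deriv
  have hΦne : ∀ ξ : ℂ, ξ ≠ 0 → Φ ξ = φ ξ / ξ := by
    intro ξ hξ
    rw [hΦ, dslope_of_ne _ hξ, slope_def_field, hφ0, sub_zero, sub_zero]
  set P : ℂ → ℂ := fun ξ => c₁ + c₂ * Φ ξ with hP
  -- membership of P values
  have hPmem : ∀ ξ : ℂ, ξ ∈ ball (0:ℂ) 1 → ξ ≠ 0 → P ξ ∈ g '' ball (0:ℂ) 1 := by
    intro ξ hξ hξ0
    have hz' : ξ • u₀ ∈ ball (0 : Cn n) 1 := hmaps ξ hξ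
    have hz'0 : ξ • u₀ ≠ 0 := smul_ne_zero hξ0 hu₀0
    have hmem := hwmem (ξ • u₀) hz' hz'0
    have hnorm : ‖ξ • u₀‖ = ‖ξ‖ := by
      rw [norm_smul, hu₀n, mul_one]
    have hconjne : (starRingEnd ℂ) ξ ≠ 0 := by
      simpa using hξ0
    have hinner : (inner ℂ (ξ • u₀) (w (ξ • u₀)) : ℂ) / (‖ξ • u₀‖:ℂ)^2 = φ ξ / ξ := by
      rw [inner_smul_left, hnorm]
      have habs2 : ((‖ξ‖ : ℝ) : ℂ)^2 = ξ * (starRingEnd ℂ) ξ := by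
        rw [Complex.mul_conj, Complex.normSq_eq_norm_sq]
        push_cast
        ring
      rw [habs2, mul_comm ξ ((starRingEnd ℂ) ξ), mul_div_mul_left _ _ hconjne]
    rw [hinner] at hmem
    have hPval : P ξ = c₁ + c₂ * (φ ξ / ξ) := by
      simp only [hP]; rw [hΦne ξ hξ0]
    rw [hPval]
    exact hmem
  -- structure of g values
  have hgval : ∀ v : ℂ, v ∈ g '' ball (0:ℂ) 1 →
      ((A:ℂ) - B * v ≠ 0 ∧ (v - 1) / ((A:ℂ) - B * v) ∈ ball (0:ℂ) 1 ∧
        v = (1 + (A:ℂ) * ((v - 1) / ((A:ℂ) - B * v))) / (1 + (B:ℂ) * ((v - 1) / ((A:ℂ) - B * v)))) := by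
    rintro v ⟨ζ, hζ, rfl⟩
    rw [mem_ball_zero_iff] at hζ
    have hABne' : (A:ℂ) - B ≠ 0 := by
      exact_mod_cast sub_ne_zero.2 (by exact_mod_cast hAB.ne : (A:ℂ) ≠ (B:ℂ))
    have hd : 1 + (B:ℂ) * ζ ≠ 0 := by
      intro h
      have h1 : ‖(B:ℂ) * ζ‖ < 1 := by
        rw [norm_mul, Complex.norm_real, Real.norm_eq_abs]
        calc |B| * ‖ζ‖ ≤ 1 * ‖ζ‖ := by
              apply mul_le_mul_of_nonneg_right _ (norm_nonneg ζ)
              rw [abs_le]; constructor <;> linarith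
          _ < 1 := by rw [one_mul]; simpa using hζ
      have h2 : (B:ℂ) * ζ = -1 := by linear_combination h
      rw [h2] at h1
      simp at h1
    have hgv : g ζ = (1 + (A:ℂ)*ζ) / (1 + (B:ℂ)*ζ) := hg ζ
    have h1 : (A:ℂ) - B * g ζ = ((A:ℂ) - B) / (1 + (B:ℂ)*ζ) := by
      rw [hgv, eq_div_iff hd, sub_mul, mul_assoc, div_mul_cancel₀ _ hd]; ring
    have hne : (A:ℂ) - B * g ζ ≠ 0 := by
      rw [h1]; exact div_ne_zero hABne' hd
    have h2 : (g ζ - 1) / ((A:ℂ) - B * g ζ) = ζ := by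
      rw [div_eq_iff hne, h1, hgv, div_sub_one hd, mul_div_assoc']
      congr 1
      ring
    refine ⟨hne, ?_, ?_⟩
    · rw [h2]; exact mem_ball_zero_iff.2 (by simpa using hζ)
    · rw [h2, ← hgv]
  -- the Schwarz function
  set ω : ℂ → ℂ := fun ξ => (P ξ - 1) / ((A:ℂ) - B * P ξ) with hω
  have hABne : (A:ℂ) - B ≠ 0 := by
    exact_mod_cast sub_ne_zero.2 (by exact_mod_cast hAB.ne : (A:ℂ) ≠ (B:ℂ))
  have hP0 : P 0 = 1 := by rw [hP]; simp only [hΦ0, mul_one]; exact hc₁₂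
  have hdenne : ∀ ξ ∈ ball (0:ℂ) 1, (A:ℂ) - B * P ξ ≠ 0 := by
    intro ξ hξ
    rcases eq_or_ne ξ 0 with rfl | hξ0
    · rw [hP0, mul_one]; exact hABne
    · exact (hgval _ (hPmem ξ hξ hξ0)).1
  have hωdiff : DifferentiableOn ℂ ω (ball (0:ℂ) 1) := by
    apply DifferentiableOn.div
    · exact (((differentiableOn_const c₂).mul hΦdiff).const_add c₁).sub (differentiableOn_const 1)
    · exact (differentiableOn_const _).sub ((differentiableOn_const _).mul
        (((differentiableOn_const c₂).mul hΦdiff).const_add c₁))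
    · exact hdenne
  have hω0 : ω 0 = 0 := by rw [hω]; simp [hP0]
  have hωmaps : Set.MapsTo ω (ball (0:ℂ) 1) (ball (0:ℂ) 1) := by
    intro ξ hξ
    rcases eq_or_ne ξ 0 with rfl | hξ0
    · rw [hω0]; exact mem_ball_self one_pos
    · exact (hgval _ (hPmem ξ hξ hξ0)).2.1
  -- Schwarz lemma at ξ = r
  have hrball : ‖((r:ℝ):ℂ)‖ < 1 := by
    rw [Complex.norm_real, Real.norm_eq_abs, abs_of_pos hr0]; exact hr1
  have hschwarz : ‖ω ((r:ℝ):ℂ)‖ ≤ r := by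
    have := Complex.norm_le_norm_of_mapsTo_ball hωdiff (hωmaps.mono_right ball_subset_closedBall) hω0 hrball
    rwa [Complex.norm_real, Real.norm_eq_abs, abs_of_pos hr0] at this
  -- lower bound for Re (P r)
  have hrmem : ((r:ℝ):ℂ) ∈ ball (0:ℂ) 1 := by rwa [mem_ball_zero_iff]
  have hrne : ((r:ℝ):ℂ) ≠ 0 := by exact_mod_cast Complex.ofReal_ne_zero.2 hr0.ne'
  have hPr := hgval _ (hPmem _ hrmem hrne)
  have hRe : (1 + A*r)/(1 + B*r) ≤ (P ((r:ℝ):ℂ)).re := by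
    rcases hPr with ⟨h1, h2, h3⟩
    rw [h3]
    exact reBound hA hAB hB hr0.le hr1 _ hschwarz
  -- relate to inner product and conclude
  have hc₂ne : c₂ ≠ 0 := by
    rw [hc₂]
    apply div_ne_zero _ hαC
    intro h
    have : (1 - Complex.I * (t:ℂ)).re = 0 := by rw [h]; simp
    simp at this
  set s := Real.sqrt (α^2 + t^2) with hs
  -- |c₁| = s/(1-α)
  have habsc₁ : ‖c₁‖ = s / (1 - α) := by
    rw [hc₁, norm_div]
    congr 1
    · have he : -(α:ℂ) + Complex.I * (t:ℂ) = ⟨-α, t⟩ := by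
        apply Complex.ext <;> simp
      rw [he, Complex.norm_def, Complex.normSq_mk, hs]
      congr 1
      ring
    · have : (1 : ℂ) - (α:ℂ) = ((1 - α : ℝ) : ℂ) := by push_cast; ring
      rw [this, Complex.norm_real, Real.norm_eq_abs, _root_.abs_of_pos (by linarith)]
  -- |c₂| = 1/((1-α) cos β)
  have hsqrt : Real.sqrt (1 + t^2) = (Real.cos β)⁻¹ := by
    rw [← Real.inv_sqrt_one_add_tan_sq hcos, inv_inv, ht]
  have habsc₂ : ‖c₂‖ = 1 / ((1 - α) * Real.cos β) := by
    rw [hc₂, norm_div]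
    have h1 : ‖(1 - Complex.I * (t:ℂ))‖ = Real.sqrt (1 + t^2) := by
      have he : (1:ℂ) - Complex.I * (t:ℂ) = ⟨1, -t⟩ := by
        apply Complex.ext <;> simp
      rw [he, Complex.norm_def, Complex.normSq_mk]
      congr 1
      ring
    have h2 : (1 : ℂ) - (α:ℂ) = ((1 - α : ℝ) : ℂ) := by push_cast; ring
    rw [h1, h2, Complex.norm_real, Real.norm_eq_abs, _root_.abs_of_pos (by linarith : (0:ℝ) < 1 - α), hsqrt]
    field_simp
  -- Φ at r and the inner product
  have hφrval : (inner ℂ z (w z) : ℂ) = ((r:ℝ):ℂ) * φ ((r:ℝ):ℂ) := by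
    conv_lhs => rw [← hzu]
    rw [inner_smul_left, Complex.conj_ofReal]
  have hCS : ‖φ ((r:ℝ):ℂ)‖ ≤ ‖w z‖ := by
    have h1 : ‖(inner ℂ z (w z) : ℂ)‖ ≤ ‖z‖ * ‖w z‖ := norm_inner_le_norm z (w z)
    rw [hφrval] at h1
    rw [norm_mul, Complex.norm_real, Real.norm_eq_abs, _root_.abs_of_pos hr0, ← hr] at h1
    exact le_of_mul_le_mul_left h1 hr0
  have hΦrval : ‖φ ((r:ℝ):ℂ)‖ = r * ‖Φ ((r:ℝ):ℂ)‖ := by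
    rw [hΦne _ hrne, norm_div, Complex.norm_real, Real.norm_eq_abs, _root_.abs_of_pos hr0]
    field_simp
  -- |Φ r| lower bound
  have hPc : P ((r:ℝ):ℂ) - c₁ = c₂ * Φ ((r:ℝ):ℂ) := by rw [hP]; ring
  have habsΦ : ‖Φ ((r:ℝ):ℂ)‖
      = ‖P ((r:ℝ):ℂ) - c₁‖ * ((1-α) * Real.cos β) := by
    rw [hPc, norm_mul, habsc₂]
    have hpos : (0:ℝ) < (1-α) * Real.cos β := mul_pos (by linarith) hcos
    field_simp
    rw [mul_div_assoc, div_self (by linarith : (1:ℝ) - α ≠ 0), mul_one]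
  have hlow : (P ((r:ℝ):ℂ)).re - s/(1-α) ≤ ‖P ((r:ℝ):ℂ) - c₁‖ := by
    have h1 : (P ((r:ℝ):ℂ)).re ≤ ‖P ((r:ℝ):ℂ)‖ := Complex.re_le_norm _
    have h2 : ‖P ((r:ℝ):ℂ)‖ - ‖c₁‖ ≤ ‖P ((r:ℝ):ℂ) - c₁‖ := by
      simpa using norm_sub_norm_le (P ((r:ℝ):ℂ)) c₁
    rw [habsc₁] at h2
    linarith
  -- final chain
  have hfinal : r * ‖Φ ((r:ℝ):ℂ)‖ ≤ ‖w z‖ := by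
    rw [← hΦrval]; exact hCS
  have hposc : (0:ℝ) < (1-α) * Real.cos β := mul_pos (by linarith) hcos
  calc ((1 + A * ‖z‖)/(1 + B * ‖z‖) - (1/(1-α)) * s) * ((1-α) * Real.cos β * ‖z‖)
      = (((1 + A * r)/(1 + B * r) - s/(1-α)) * ((1-α) * Real.cos β)) * r := by
        rw [← hr]; ring
    _ ≤ (((P ((r:ℝ):ℂ)).re - s/(1-α)) * ((1-α) * Real.cos β)) * r := by
        apply mul_le_mul_of_nonneg_right _ hr0.le
        apply mul_le_mul_of_nonneg_right _ hposc.le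
        linarith [hRe]
    _ ≤ (‖P ((r:ℝ):ℂ) - c₁‖ * ((1-α) * Real.cos β)) * r := by
        apply mul_le_mul_of_nonneg_right _ hr0.le
        apply mul_le_mul_of_nonneg_right hlow hposc.le
    _ = r * ‖Φ ((r:ℝ):ℂ)‖ := by rw [habsΦ]; ring
    _ ≤ ‖w z‖ := hfinal
end
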